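/- For every fixed z ∈ ℝ^n and every τ > 0, the full-coordinates oracle satisfies ‖E[g_f(z,τ,ξ)] − F(z)‖_q ≤ √n L τ + 2 √n Δ/τ, where the expectation is over ξ. -/

import Mathlib

open MeasureTheory Real Finset
open scoped RealInnerProductSpace

set_option maxHeartbeats 1600000

noncomputable section

/-- `ℝ^n` with the Euclidean structure. -/
abbrev Esp (n : ℕ) := EuclideanSpace ℝ (Fin n)

/-- `ℝ^{n_x} × ℝ^{n_y}` with the Euclidean (ℓ₂-product) structure. -/
abbrev Zsp (nx ny : ℕ) := WithLp 2 (Esp nx × Esp ny)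

/-- Pairing `(x, y) ∈ ℝ^{n_x} × ℝ^{n_y} = ℝ^n`. -/
def mkZ {nx ny : ℕ} (x : Esp nx) (y : Esp ny) : Zsp nx ny := (WithLp.equiv 2 _).symm (x, y)

/-- The ℓ_q "norm" `(∑ i, |z_i|^q)^{1/q}` on `ℝ^n = ℝ^{n_x} × ℝ^{n_y}`. -/
def lqN (q : ℝ) {nx ny : ℕ} (z : Zsp nx ny) : ℝ :=
  ((∑ i, |z.fst i| ^ q) + ∑ j, |z.snd j| ^ q) ^ (1 / q)

/-- The saddle-point operator `F(x,y) = (∇_x f(x,y), −∇_y f(x,y))`. -/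
def sadOp {nx ny : ℕ} (f : Zsp nx ny → ℝ) (z : Zsp nx ny) : Zsp nx ny :=
  mkZ (gradient (fun x => f (mkZ x z.snd)) z.fst) (-(gradient (fun y => f (mkZ z.fst y)) z.snd))

/-- The full-coordinates zeroth-order oracle
`g_f(z,τ,ξ) = (1/τ) ∑_{i≤n_x} (f̃(z+τh_i,ξ) − f̃(z,ξ)) h_i
            + (1/τ) ∑_{i>n_x} (f̃(z,ξ) − f̃(z+τh_i,ξ)) h_i`,
written componentwise in `ℝ^{n_x} × ℝ^{n_y}`. -/
def gfOr {nx ny : ℕ} {Ξ : Type*} (ftil : Zsp nx ny → Ξ → ℝ) (z : Zsp nx ny) (τ : ℝ)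
    (ξv : Ξ) : Zsp nx ny :=
  mkZ (WithLp.toLp 2 (fun i => (ftil (mkZ (z.fst + τ • EuclideanSpace.single i 1) z.snd) ξv - ftil z ξv) / τ))
      (WithLp.toLp 2 (fun j => (ftil z ξv - ftil (mkZ z.fst (z.snd + τ • EuclideanSpace.single j 1)) ξv) / τ))

/-! ### Auxiliary machinery -/

section Aux

variable {nx ny : ℕ}

/-- The continuous linear inclusion `x ↦ (x, 0)`. -/
def inlZ (nx ny : ℕ) : Esp nx →L[ℝ] Zsp nx ny :=
  ((WithLp.prodContinuousLinearEquiv 2 ℝ (Esp nx) (Esp ny)).symm.toContinuousLinearMap).comp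
    (ContinuousLinearMap.inl ℝ (Esp nx) (Esp ny))

/-- The continuous linear inclusion `y ↦ (0, y)`. -/
def inrZ (nx ny : ℕ) : Esp ny →L[ℝ] Zsp nx ny :=
  ((WithLp.prodContinuousLinearEquiv 2 ℝ (Esp nx) (Esp ny)).symm.toContinuousLinearMap).comp
    (ContinuousLinearMap.inr ℝ (Esp nx) (Esp ny))

/-- Coordinate projection `z ↦ z.fst i` as a continuous linear map. -/
def pXZ (i : Fin nx) : Zsp nx ny →L[ℝ] ℝ :=
  (EuclideanSpace.proj i).comp ((ContinuousLinearMap.fst ℝ (Esp nx) (Esp ny)).comp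
    (WithLp.prodContinuousLinearEquiv 2 ℝ (Esp nx) (Esp ny)).toContinuousLinearMap)

/-- Coordinate projection `z ↦ z.snd j` as a continuous linear map. -/
def pYZ (j : Fin ny) : Zsp nx ny →L[ℝ] ℝ :=
  (EuclideanSpace.proj j).comp ((ContinuousLinearMap.snd ℝ (Esp nx) (Esp ny)).comp
    (WithLp.prodContinuousLinearEquiv 2 ℝ (Esp nx) (Esp ny)).toContinuousLinearMap)

lemma Zext {a b : Zsp nx ny} (h1 : a.fst = b.fst) (h2 : a.snd = b.snd) : a = b := by
  have : (a.fst, a.snd) = (b.fst, b.snd) := by rw [h1, h2]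
  exact WithLp.ofLp_injective 2 this

lemma hasfd_x (f : Zsp nx ny → ℝ) (hf : Differentiable ℝ f) (z : Zsp nx ny) :
    HasFDerivAt (fun x => f (mkZ x z.snd)) ((fderiv ℝ f z).comp (inlZ nx ny)) z.fst := by
  have h1 : HasFDerivAt (fun x : Esp nx => mkZ x z.snd) (inlZ nx ny) z.fst := by
    have : (fun x : Esp nx => mkZ x z.snd) = fun x => inlZ nx ny x + mkZ 0 z.snd := by
      funext x
      show mkZ x z.snd = mkZ x 0 + mkZ 0 z.snd
      show mkZ x z.snd = mkZ (x + 0) (0 + z.snd)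
      simp
    rw [this]
    exact ((inlZ nx ny).hasFDerivAt).add_const _
  exact ((hf z).hasFDerivAt).comp z.fst h1

lemma hasfd_y (f : Zsp nx ny → ℝ) (hf : Differentiable ℝ f) (z : Zsp nx ny) :
    HasFDerivAt (fun y => f (mkZ z.fst y)) ((fderiv ℝ f z).comp (inrZ nx ny)) z.snd := by
  have h1 : HasFDerivAt (fun y : Esp ny => mkZ z.fst y) (inrZ nx ny) z.snd := by
    have : (fun y : Esp ny => mkZ z.fst y) = fun y => inrZ nx ny y + mkZ z.fst 0 := by
      funext y
      show mkZ z.fst y = mkZ (0 + z.fst) (y + 0)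
      simp
    rw [this]
    exact ((inrZ nx ny).hasFDerivAt).add_const _
  exact ((hf z).hasFDerivAt).comp z.snd h1

lemma grad_coord (g : Esp nx → ℝ) (x : Esp nx) (i : Fin nx) :
    gradient g x i = fderiv ℝ g x (EuclideanSpace.single i 1) := by
  have h : ⟪gradient g x, EuclideanSpace.single i 1⟫ = fderiv ℝ g x (EuclideanSpace.single i 1) :=
    InnerProductSpace.toDual_symm_apply
  rw [EuclideanSpace.inner_single_right] at h
  simpa using h

lemma sadOp_fst (f : Zsp nx ny → ℝ) (hf : Differentiable ℝ f) (z : Zsp nx ny) (i : Fin nx) :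
    (sadOp f z).fst i = fderiv ℝ f z (mkZ (EuclideanSpace.single i 1) 0) := by
  show gradient (fun x => f (mkZ x z.snd)) z.fst i = _
  rw [grad_coord, (hasfd_x f hf z).fderiv]
  rfl

lemma sadOp_snd (f : Zsp nx ny → ℝ) (hf : Differentiable ℝ f) (z : Zsp nx ny) (j : Fin ny) :
    (sadOp f z).snd j = -(fderiv ℝ f z (mkZ 0 (EuclideanSpace.single j 1))) := by
  show -(gradient (fun y => f (mkZ z.fst y)) z.snd) j = _
  have : gradient (fun y => f (mkZ z.fst y)) z.snd j
      = fderiv ℝ f z (mkZ 0 (EuclideanSpace.single j 1)) := by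
    rw [grad_coord, (hasfd_y f hf z).fderiv]; rfl
  simp [← this]

lemma grad_Z_coord_fst (f : Zsp nx ny → ℝ) (z : Zsp nx ny) (i : Fin nx) :
    (gradient f z).fst i = fderiv ℝ f z (mkZ (EuclideanSpace.single i 1) 0) := by
  have h : ⟪gradient f z, mkZ (EuclideanSpace.single i 1) 0⟫
      = fderiv ℝ f z (mkZ (EuclideanSpace.single i 1) 0) :=
    InnerProductSpace.toDual_symm_apply
  rw [WithLp.prod_inner_apply] at h
  have h2 : ((mkZ (EuclideanSpace.single i 1) 0 : Zsp nx ny)).ofLp.2 = (0 : Esp ny) := rfl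
  rw [h2] at h
  simp only [inner_zero_right, add_zero] at h
  have h3 : ⟪(gradient f z).fst, EuclideanSpace.single i 1⟫ = (gradient f z).fst i := by
    rw [EuclideanSpace.inner_single_right]; simp
  rw [← h3]
  exact h

lemma grad_Z_coord_snd (f : Zsp nx ny → ℝ) (z : Zsp nx ny) (j : Fin ny) :
    (gradient f z).snd j = fderiv ℝ f z (mkZ 0 (EuclideanSpace.single j 1)) := by
  have h : ⟪gradient f z, mkZ 0 (EuclideanSpace.single j 1)⟫
      = fderiv ℝ f z (mkZ 0 (EuclideanSpace.single j 1)) :=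
    InnerProductSpace.toDual_symm_apply
  rw [WithLp.prod_inner_apply] at h
  have h2 : ((mkZ 0 (EuclideanSpace.single j 1) : Zsp nx ny)).ofLp.1 = (0 : Esp nx) := rfl
  rw [h2] at h
  simp only [inner_zero_right, zero_add] at h
  have h3 : ⟪(gradient f z).snd, EuclideanSpace.single j 1⟫ = (gradient f z).snd j := by
    rw [EuclideanSpace.inner_single_right]; simp
  rw [← h3]
  exact h

lemma grad_decomp (f : Zsp nx ny → ℝ) (hf : Differentiable ℝ f) (z : Zsp nx ny) :
    gradient f z = mkZ ((sadOp f z).fst) (-(sadOp f z).snd) := by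
  apply Zext
  · ext i
    show (gradient f z).fst i = (sadOp f z).fst i
    rw [grad_Z_coord_fst, sadOp_fst f hf]
  · ext j
    show (gradient f z).snd j = -((sadOp f z).snd) j
    have : -((sadOp f z).snd) j = -((sadOp f z).snd j) := rfl
    rw [this, grad_Z_coord_snd, sadOp_snd f hf, neg_neg]

lemma norm_grad_sub (f : Zsp nx ny → ℝ) (hf : Differentiable ℝ f) (z1 z2 : Zsp nx ny) :
    ‖gradient f z1 - gradient f z2‖ = ‖sadOp f z1 - sadOp f z2‖ := by
  have e1 : ‖gradient f z1 - gradient f z2‖ ^ 2 = ‖sadOp f z1 - sadOp f z2‖ ^ 2 := by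
    rw [WithLp.prod_norm_sq_eq_of_L2, WithLp.prod_norm_sq_eq_of_L2,
      grad_decomp f hf, grad_decomp f hf]
    have hfst : (mkZ ((sadOp f z1).fst) (-(sadOp f z1).snd)
          - mkZ ((sadOp f z2).fst) (-(sadOp f z2).snd)).fst
        = (sadOp f z1 - sadOp f z2).fst := rfl
    have hsnd : (mkZ ((sadOp f z1).fst) (-(sadOp f z1).snd)
          - mkZ ((sadOp f z2).fst) (-(sadOp f z2).snd)).snd
        = -((sadOp f z1 - sadOp f z2).snd) := by
      show -(sadOp f z1).snd - -(sadOp f z2).snd = -((sadOp f z1).snd - (sadOp f z2).snd)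
      abel
    rw [hfst, hsnd, norm_neg]
  nlinarith [e1, norm_nonneg (gradient f z1 - gradient f z2),
    norm_nonneg (sadOp f z1 - sadOp f z2)]

lemma norm_fderiv_sub (f : Zsp nx ny → ℝ) (z1 z2 : Zsp nx ny) :
    ‖fderiv ℝ f z1 - fderiv ℝ f z2‖ = ‖gradient f z1 - gradient f z2‖ := by
  have h : ∀ z : Zsp nx ny,
      fderiv ℝ f z = InnerProductSpace.toDual ℝ (Zsp nx ny) (gradient f z) := by
    intro z; rw [gradient]; simp
  rw [h, h, ← map_sub,
    ← LinearIsometryEquiv.norm_map (InnerProductSpace.toDual ℝ (Zsp nx ny)).symm]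
  simp
  rfl

lemma norm_mkZ_sq (a : Esp nx) (b : Esp ny) :
    ‖(mkZ a b : Zsp nx ny)‖ ^ 2 = ‖a‖ ^ 2 + ‖b‖ ^ 2 :=
  WithLp.prod_norm_sq_eq_of_L2 _

lemma norm_exZ (i : Fin nx) : ‖(mkZ (EuclideanSpace.single i 1) 0 : Zsp nx ny)‖ = 1 := by
  have h : ‖(mkZ (EuclideanSpace.single i 1) 0 : Zsp nx ny)‖ ^ 2 = 1 := by
    rw [norm_mkZ_sq]
    simp [EuclideanSpace.norm_single]
  have := Real.sqrt_sq (norm_nonneg (mkZ (EuclideanSpace.single i 1) 0 : Zsp nx ny))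
  rw [← this, h, Real.sqrt_one]

lemma norm_eyZ (j : Fin ny) : ‖(mkZ 0 (EuclideanSpace.single j 1) : Zsp nx ny)‖ = 1 := by
  have h : ‖(mkZ 0 (EuclideanSpace.single j 1) : Zsp nx ny)‖ ^ 2 = 1 := by
    rw [norm_mkZ_sq]
    simp [EuclideanSpace.norm_single]
  have := Real.sqrt_sq (norm_nonneg (mkZ 0 (EuclideanSpace.single j 1) : Zsp nx ny))
  rw [← this, h, Real.sqrt_one]

end Aux

/-- Bias bound for the full-coordinates oracle:
`‖E[g_f(z,τ,ξ)] − F(z)‖_q ≤ √n L τ + 2 √n Δ/τ`. -/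
theorem full_coordinates_bias {nx ny : ℕ} (hnx : 1 ≤ nx) (hny : 1 ≤ ny)
    (q : ℝ) (hq : 2 ≤ q)
    {Ω : Type*} [MeasurableSpace Ω] (μ : Measure Ω) [IsProbabilityMeasure μ]
    (fsto : Zsp nx ny → Ω → ℝ) (hfsto : ∀ ω, Differentiable ℝ (fun z => fsto z ω))
    (fdet : Zsp nx ny → ℝ) (hfdet : Differentiable ℝ fdet)
    (Δ L : ℝ) (δ : Zsp nx ny → ℝ) (hδ : ∀ z, |δ z| ≤ Δ)
    (hfunb : ∀ z, ∫ ω, fsto z ω ∂μ = fdet z)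
    (hfInt : ∀ z, Integrable (fun ω => fsto z ω) μ)
    (hFunb : ∀ z, ∫ ω, (sadOp (fun z' => fsto z' ω) z) ∂μ = sadOp fdet z)
    (hLip : ∀ z1 z2, ‖sadOp fdet z1 - sadOp fdet z2‖ ≤ L * ‖z1 - z2‖)
    (z : Zsp nx ny) (τ : ℝ) (hτ : 0 < τ)
    (horInt : Integrable (fun ω => gfOr (fun z' ω' => fsto z' ω' + δ z') z τ ω) μ) :
    lqN q ((∫ ω, gfOr (fun z' ω' => fsto z' ω' + δ z') z τ ω ∂μ) - sadOp fdet z) ≤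
      Real.sqrt (nx + ny : ℝ) * L * τ + 2 * Real.sqrt (nx + ny : ℝ) * Δ / τ := by
  classical
  have hτ' : τ ≠ 0 := ne_of_gt hτ
  have hΔ0 : 0 ≤ Δ := le_trans (abs_nonneg _) (hδ z)
  set I : Zsp nx ny := ∫ ω, gfOr (fun z' ω' => fsto z' ω' + δ z') z τ ω ∂μ with hI
  set w : Zsp nx ny := I - sadOp fdet z with hw
  -- L is nonnegative
  have hL0 : 0 ≤ L := by
    have i0 : Fin nx := ⟨0, hnx⟩
    have h1 := hLip (mkZ (EuclideanSpace.single i0 1) 0) 0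
    have h2 : ‖(mkZ (EuclideanSpace.single i0 1) 0 : Zsp nx ny) - 0‖ = 1 := by
      rw [sub_zero]; exact norm_exZ i0
    rw [h2, mul_one] at h1
    exact le_trans (norm_nonneg _) h1
  -- fderiv of fdet is L-Lipschitz
  have hfd : ∀ z1 z2 : Zsp nx ny, ‖fderiv ℝ fdet z1 - fderiv ℝ fdet z2‖ ≤ L * ‖z1 - z2‖ := by
    intro z1 z2
    rw [norm_fderiv_sub, norm_grad_sub fdet hfdet]
    exact hLip z1 z2
  -- Taylor-type bound
  have htay : ∀ v : Zsp nx ny,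
      |fdet (z + v) - fdet z - fderiv ℝ fdet z v| ≤ L * ‖v‖ ^ 2 := by
    intro v
    have key : ‖fdet (z + v) - fdet z - fderiv ℝ fdet z (z + v - z)‖
        ≤ (L * ‖v‖) * ‖z + v - z‖ :=
      Convex.norm_image_sub_le_of_norm_fderiv_le'
        (fun x _ => hfdet x)
        (fun x hx => by
          have hxz : ‖x - z‖ ≤ ‖v‖ := by
            simpa [dist_eq_norm] using hx
          calc ‖fderiv ℝ fdet x - fderiv ℝ fdet z‖ ≤ L * ‖x - z‖ := hfd x z
            _ ≤ L * ‖v‖ := by nlinarith)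
        (convex_closedBall z ‖v‖)
        (Metric.mem_closedBall_self (norm_nonneg v))
        (by simp [Metric.mem_closedBall, dist_eq_norm])
    have hsimp : z + v - z = v := by abel
    rw [hsimp] at key
    calc |fdet (z + v) - fdet z - fderiv ℝ fdet z v|
        ≤ L * ‖v‖ * ‖v‖ := key
      _ = L * ‖v‖ ^ 2 := by ring
  -- the x-coordinates of the integral
  have hIx : ∀ i : Fin nx,
      I.fst i = ((fdet (mkZ (z.fst + τ • EuclideanSpace.single i 1) z.snd)
          + δ (mkZ (z.fst + τ • EuclideanSpace.single i 1) z.snd)) - (fdet z + δ z)) / τ := by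
    intro i
    set zxi := mkZ (z.fst + τ • EuclideanSpace.single i 1) z.snd with hzxi
    have h : I.fst i = ∫ ω, ((fsto zxi ω + δ zxi) - (fsto z ω + δ z)) / τ ∂μ :=
      by exact ((pXZ i).integral_comp_comm horInt).symm.trans rfl
    have hInt1 : Integrable (fun ω => fsto zxi ω + δ zxi) μ := (hfInt zxi).add (integrable_const _)
    have hInt2 : Integrable (fun ω => fsto z ω + δ z) μ := (hfInt z).add (integrable_const _)
    rw [h, integral_div, integral_sub hInt1 hInt2,
      integral_add (hfInt zxi) (integrable_const _),
      integral_add (hfInt z) (integrable_const _), hfunb, hfunb, integral_const]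
    simp
  -- the y-coordinates of the integral
  have hIy : ∀ j : Fin ny,
      I.snd j = ((fdet z + δ z) - (fdet (mkZ z.fst (z.snd + τ • EuclideanSpace.single j 1))
          + δ (mkZ z.fst (z.snd + τ • EuclideanSpace.single j 1)))) / τ := by
    intro j
    set zyj := mkZ z.fst (z.snd + τ • EuclideanSpace.single j 1) with hzyj
    have h : I.snd j = ∫ ω, ((fsto z ω + δ z) - (fsto zyj ω + δ zyj)) / τ ∂μ :=
      by exact ((pYZ j).integral_comp_comm horInt).symm.trans rfl
    have hInt1 : Integrable (fun ω => fsto z ω + δ z) μ := (hfInt z).add (integrable_const _)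
    have hInt2 : Integrable (fun ω => fsto zyj ω + δ zyj) μ := (hfInt zyj).add (integrable_const _)
    rw [h, integral_div, integral_sub hInt1 hInt2,
      integral_add (hfInt z) (integrable_const _),
      integral_add (hfInt zyj) (integrable_const _), hfunb, hfunb, integral_const]
    simp
  set B : ℝ := L * τ + 2 * Δ / τ with hBdef
  have hB0 : 0 ≤ B := by positivity
  -- generic coordinate bound
  have hgen : ∀ e : Zsp nx ny, ‖e‖ = 1 →
      |(fdet (z + τ • e) + δ (z + τ • e) - (fdet z + δ z)) / τ - fderiv ℝ fdet z e| ≤ B := by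
    intro e he
    have htv : ‖τ • e‖ ^ 2 = τ ^ 2 := by
      rw [norm_smul, he]
      simp [abs_of_pos hτ]
    have h1 : |fdet (z + τ • e) - fdet z - fderiv ℝ fdet z (τ • e)| ≤ L * τ ^ 2 := by
      have := htay (τ • e)
      rwa [htv] at this
    have hmap : fderiv ℝ fdet z (τ • e) = τ * fderiv ℝ fdet z e := by simp
    rw [hmap] at h1
    set A := fdet (z + τ • e) - fdet z - τ * fderiv ℝ fdet z e with hA
    have hrw : (fdet (z + τ • e) + δ (z + τ • e) - (fdet z + δ z)) / τ - fderiv ℝ fdet z e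
        = A / τ + (δ (z + τ • e) - δ z) / τ := by
      rw [hA]; field_simp; ring
    rw [hrw]
    have habs : |A / τ + (δ (z + τ • e) - δ z) / τ|
        ≤ |A| / τ + (|δ (z + τ • e)| + |δ z|) / τ := by
      calc |A / τ + (δ (z + τ • e) - δ z) / τ|
          ≤ |A / τ| + |(δ (z + τ • e) - δ z) / τ| := abs_add_le _ _
        _ = |A| / τ + |δ (z + τ • e) - δ z| / τ := by
            rw [abs_div, abs_div, abs_of_pos hτ]
        _ ≤ |A| / τ + (|δ (z + τ • e)| + |δ z|) / τ := by
            have h2 := abs_sub (δ (z + τ • e)) (δ z)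
            gcongr
    have hA2 : |A| / τ ≤ L * τ := by
      rw [div_le_iff₀ hτ]
      calc |A| ≤ L * τ ^ 2 := h1
        _ = L * τ * τ := by ring
    have hδ2 : (|δ (z + τ • e)| + |δ z|) / τ ≤ 2 * Δ / τ := by
      gcongr
      linarith [hδ (z + τ • e), hδ z]
    calc |A / τ + (δ (z + τ • e) - δ z) / τ|
        ≤ |A| / τ + (|δ (z + τ • e)| + |δ z|) / τ := habs
      _ ≤ L * τ + 2 * Δ / τ := by linarith
  -- x-coordinate bound
  have hbx : ∀ i : Fin nx, |w.fst i| ≤ B := by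
    intro i
    set e : Zsp nx ny := mkZ (EuclideanSpace.single i 1) 0 with hedef
    have hze : mkZ (z.fst + τ • EuclideanSpace.single i 1) z.snd = z + τ • e := by
      apply Zext
      · rfl
      · show z.snd = z.snd + τ • (0 : Esp ny)
        rw [smul_zero, add_zero]
    have hc : w.fst i = (fdet (z + τ • e) + δ (z + τ • e) - (fdet z + δ z)) / τ
        - fderiv ℝ fdet z e := by
      show I.fst i - (sadOp fdet z).fst i = _
      rw [hIx i, sadOp_fst fdet hfdet z i, hze]
    rw [hc]
    exact hgen e (norm_exZ i)
  -- y-coordinate bound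
  have hby : ∀ j : Fin ny, |w.snd j| ≤ B := by
    intro j
    set e : Zsp nx ny := mkZ 0 (EuclideanSpace.single j 1) with hedef
    have hze : mkZ z.fst (z.snd + τ • EuclideanSpace.single j 1) = z + τ • e := by
      apply Zext
      · show z.fst = z.fst + τ • (0 : Esp nx)
        rw [smul_zero, add_zero]
      · rfl
    have hc : w.snd j = -((fdet (z + τ • e) + δ (z + τ • e) - (fdet z + δ z)) / τ
        - fderiv ℝ fdet z e) := by
      show I.snd j - (sadOp fdet z).snd j = _
      rw [hIy j, sadOp_snd fdet hfdet z j, hze]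
      ring
    rw [hc, abs_neg]
    exact hgen e (norm_eyZ j)
  -- now the ℓ_q bound
  have hq0 : (0 : ℝ) < q := lt_of_lt_of_le two_pos hq
  have hq' : q ≠ 0 := ne_of_gt hq0
  have hsum : (∑ i, |w.fst i| ^ q) + ∑ j, |w.snd j| ^ q ≤ ((nx : ℝ) + ny) * B ^ q := by
    have h1 : (∑ i, |w.fst i| ^ q) ≤ (nx : ℝ) * B ^ q := by
      calc (∑ i, |w.fst i| ^ q) ≤ ∑ _i : Fin nx, B ^ q :=
            Finset.sum_le_sum (fun i _ => Real.rpow_le_rpow (abs_nonneg _) (hbx i) (le_of_lt hq0))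
        _ = (nx : ℝ) * B ^ q := by simp [Finset.sum_const, nsmul_eq_mul]
    have h2 : (∑ j, |w.snd j| ^ q) ≤ (ny : ℝ) * B ^ q := by
      calc (∑ j, |w.snd j| ^ q) ≤ ∑ _j : Fin ny, B ^ q :=
            Finset.sum_le_sum (fun j _ => Real.rpow_le_rpow (abs_nonneg _) (hby j) (le_of_lt hq0))
        _ = (ny : ℝ) * B ^ q := by simp [Finset.sum_const, nsmul_eq_mul]
    calc (∑ i, |w.fst i| ^ q) + ∑ j, |w.snd j| ^ q
        ≤ (nx : ℝ) * B ^ q + (ny : ℝ) * B ^ q := add_le_add h1 h2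
      _ = ((nx : ℝ) + ny) * B ^ q := by ring
  have hsum0 : (0 : ℝ) ≤ (∑ i, |w.fst i| ^ q) + ∑ j, |w.snd j| ^ q := by
    apply add_nonneg <;> exact Finset.sum_nonneg fun i _ => Real.rpow_nonneg (abs_nonneg _) q
  have hn1 : (1 : ℝ) ≤ (nx : ℝ) + ny := by
    have : (1 : ℝ) ≤ (nx : ℝ) := by exact_mod_cast hnx
    have h0 : (0 : ℝ) ≤ (ny : ℝ) := Nat.cast_nonneg ny
    linarith
  have hn0 : (0 : ℝ) ≤ (nx : ℝ) + ny := le_trans zero_le_one hn1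
  have step1 : lqN q w ≤ (((nx : ℝ) + ny) * B ^ q) ^ (1 / q) := by
    rw [lqN]
    exact Real.rpow_le_rpow hsum0 hsum (by positivity)
  have step2 : (((nx : ℝ) + ny) * B ^ q) ^ (1 / q) = ((nx : ℝ) + ny) ^ (1 / q) * B := by
    rw [Real.mul_rpow hn0 (Real.rpow_nonneg hB0 q), ← Real.rpow_mul hB0,
      mul_one_div_cancel hq', Real.rpow_one]
  have step3 : ((nx : ℝ) + ny) ^ (1 / q) ≤ Real.sqrt ((nx : ℝ) + ny) := by
    rw [Real.sqrt_eq_rpow]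
    apply Real.rpow_le_rpow_of_exponent_le hn1
    apply one_div_le_one_div_of_le two_pos hq
  have hfinal : lqN q w ≤ Real.sqrt ((nx : ℝ) + ny) * B := by
    calc lqN q w ≤ (((nx : ℝ) + ny) * B ^ q) ^ (1 / q) := step1
      _ = ((nx : ℝ) + ny) ^ (1 / q) * B := step2
      _ ≤ Real.sqrt ((nx : ℝ) + ny) * B := mul_le_mul_of_nonneg_right step3 hB0
  calc lqN q w ≤ Real.sqrt ((nx : ℝ) + ny) * B := hfinal
    _ = Real.sqrt (nx + ny : ℝ) * L * τ + 2 * Real.sqrt (nx + ny : ℝ) * Δ / τ := by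
        rw [hBdef]; push_cast; ring
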